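/- arXiv:1107.0487 — 2 statements merged into one kernel-verified Lean document; each statement's English description precedes it below -/
import Mathlib

section
/- Let M be a smooth m-dimensional manifold, p ∈ M, F_p the algebra of germs of smooth functions at p, and I_p the ideal of germs vanishing at p. If (U, φ) is a chart around p with coordinate functions x^i = t^i ∘ φ satisfying x^i(p) = 0, then the classes of x^1, …, x^m form a basis of the real vector space I_p / I_p², which is therefore m-dimensional. -/
open scoped Manifold

set_option synthInstance.maxHeartbeats 400000
set_option maxHeartbeats 1000000

noncomputable section

variable (m : ℕ) {M : Type*} [TopologicalSpace M]
  [ChartedSpace (EuclideanSpace ℝ (Fin m)) M]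
  [IsManifold (𝓡 m) (⊤ : ℕ∞) M]

/-- The algebra of smooth real functions on `M`. -/
abbrev SF (M : Type*) [TopologicalSpace M]
    [ChartedSpace (EuclideanSpace ℝ (Fin m)) M] :=
  ContMDiffMap (𝓡 m) 𝓘(ℝ, ℝ) M ℝ (⊤ : ℕ∞)

/-- The ideal of smooth functions vanishing on a neighbourhood of `p`. -/
def nhdIdeal (p : M) : Ideal (SF m M) where
  carrier := {f | ∀ᶠ x in nhds p, f x = 0}
  add_mem' := by
    intro f g hf hg; filter_upwards [hf, hg] with x hx hy
    simp [hx, hy]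
  zero_mem' := by filter_upwards with x; simp
  smul_mem' := by
    intro c f hf; filter_upwards [hf] with x hx
    simp [smul_eq_mul, hx]

/-- The algebra of germs of smooth functions at `p`. -/
abbrev Germs (p : M) := SF m M ⧸ nhdIdeal m p

def evalHom (p : M) : SF m M →+* ℝ where
  toFun f := f p
  map_one' := rfl
  map_mul' _ _ := rfl
  map_zero' := rfl
  map_add' _ _ := rfl

/-- Evaluation of germs at `p`. -/
def germEval (p : M) : Germs m p →+* ℝ :=
  Ideal.Quotient.lift (nhdIdeal m p) (evalHom m p)
    (fun f hf => (hf : ∀ᶠ x in nhds p, f x = 0).self_of_nhds)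

/-- The maximal ideal `I_p` of germs vanishing at `p`. -/
def mIdeal (p : M) : Ideal (Germs m p) := RingHom.ker (germEval m p)

/-- The quotient `I_p / I_p^{r+1}` as a real vector space. -/
abbrev IQ (p : M) (r : ℕ) :=
  ↥((mIdeal m p).restrictScalars ℝ) ⧸
    (Submodule.comap ((mIdeal m p).restrictScalars ℝ).subtype
      ((mIdeal m p ^ (r + 1)).restrictScalars ℝ))

lemma mk_mem_mIdeal (p : M) (f : SF m M) (hf : f p = 0) :
    Ideal.Quotient.mk (nhdIdeal m p) f ∈ (mIdeal m p).restrictScalars ℝ := by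
  simp [Submodule.restrictScalars_mem, mIdeal, RingHom.mem_ker, germEval,
    Ideal.Quotient.lift_mk, evalHom, hf]
  exact hf


open MeasureTheory intervalIntegral Metric ContDiff Topology Filter

local notation "E" => EuclideanSpace ℝ (Fin m)

lemma contDiff_param {V : Type*} [NormedAddCommGroup V] [NormedSpace ℝ V] [CompleteSpace V]
    (K : ℝ × E → V) (hK : ContDiff ℝ ∞ K) :
    ContDiff ℝ ∞ (fun t : E => ∫ s in (0:ℝ)..1, K (s, t)) := by
  suffices H : ∀ (n : ℕ) (V : Type _) (_ : NormedAddCommGroup V) (_ : @NormedSpace ℝ V _ _)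
      (_ : CompleteSpace V) (K : ℝ × E → V), ContDiff ℝ ∞ K →
      ContDiff ℝ n (fun t : E => ∫ s in (0:ℝ)..1, K (s, t)) by
    rw [contDiff_infty]
    exact fun n => H n V ‹_› ‹_› ‹_› K hK
  clear hK K
  intro n
  induction n with
  | zero =>
    intro V _ _ _ K hK
    rw [Nat.cast_zero, contDiff_zero]
    exact continuous_parametric_intervalIntegral_of_continuous'
      (by exact hK.continuous.comp (continuous_swap)) 0 1
  | succ n ih =>
    intro V iV jV cV K hK
    have hfd : ContDiff ℝ ∞ (fderiv ℝ K) := hK.fderiv_right (by simp)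
    set K' := fun q : ℝ × E => (fderiv ℝ K q).comp (ContinuousLinearMap.inr ℝ ℝ E) with hK'def
    have hK' : ContDiff ℝ ∞ K' :=
      (((ContinuousLinearMap.compL ℝ E (ℝ × E) V).flip
        (ContinuousLinearMap.inr ℝ ℝ E)).contDiff).comp hfd
    have hderiv : ∀ t₀ : E, HasFDerivAt (fun t : E => ∫ s in (0:ℝ)..1, K (s, t))
        (∫ s in (0:ℝ)..1, K' (s, t₀)) t₀ := by
      intro t₀
      obtain ⟨C, hC⟩ : ∃ C, ∀ q ∈ (Set.uIcc (0:ℝ) 1) ×ˢ closedBall t₀ 1, ‖K' q‖ ≤ C :=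
        (isCompact_uIcc.prod (isCompact_closedBall t₀ 1)).exists_bound_of_continuousOn
          hK'.continuous.continuousOn
      apply intervalIntegral.hasFDerivAt_integral_of_dominated_of_fderiv_le (μ := volume)
        (F := fun (x : E) (s : ℝ) => K (s, x)) (F' := fun (x : E) (s : ℝ) => K' (s, x))
        (bound := fun _ => C) (ball_mem_nhds t₀ zero_lt_one)
      · exact Filter.Eventually.of_forall fun x =>
          (hK.continuous.comp (continuous_id.prodMk continuous_const)).aestronglyMeasurable
      · exact (hK.continuous.comp (continuous_id.prodMk continuous_const)).intervalIntegrable 0 1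
      · exact (hK'.continuous.comp (continuous_id.prodMk continuous_const)).aestronglyMeasurable
      · refine Filter.Eventually.of_forall fun s hs => fun x hx => hC (s, x) ?_
        exact ⟨Set.uIoc_subset_uIcc hs, ball_subset_closedBall hx⟩
      · exact intervalIntegrable_const
      · refine Filter.Eventually.of_forall fun s hs => fun x hx => ?_
        exact ((hK.differentiable (by simp) (s, x)).hasFDerivAt).comp x
          (hasFDerivAt_prodMk_right s x)
    rw [show ((n + 1 : ℕ) : WithTop ℕ∞) = (n : WithTop ℕ∞) + 1 by push_cast ; rfl,
      contDiff_succ_iff_fderiv]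
    refine ⟨fun t => (hderiv t).differentiableAt, by simp, ?_⟩
    have heq : (fderiv ℝ fun t : E => ∫ s in (0:ℝ)..1, K (s, t)) =
        fun t : E => ∫ s in (0:ℝ)..1, K' (s, t) := funext fun t => (hderiv t).fderiv
    rw [heq]
    exact ih (E →L[ℝ] V) inferInstance inferInstance inferInstance K' hK'

lemma hadamard (F : E → ℝ) (hF : ContDiff ℝ ∞ F) (hF0 : F 0 = 0) :
    ∃ G : Fin m → E → ℝ, (∀ i, ContDiff ℝ ∞ (G i)) ∧
      ∀ t : E, F t = ∑ i, t i * G i t := by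
  classical
  refine ⟨fun i t => ∫ s in (0:ℝ)..1, fderiv ℝ F (s • t) (EuclideanSpace.single i 1), ?_, ?_⟩
  · intro i
    have h1 : ContDiff ℝ ∞ (fun q : ℝ × E => fderiv ℝ F (q.1 • q.2)) :=
      (hF.fderiv_right (by simp)).comp (contDiff_fst.smul contDiff_snd)
    exact contDiff_param m (fun q : ℝ × E => fderiv ℝ F (q.1 • q.2) (EuclideanSpace.single i 1))
      (h1.clm_apply contDiff_const)
  · intro t
    have hcont : Continuous (fun s : ℝ => fderiv ℝ F (s • t)) :=
      (hF.continuous_fderiv (by simp)).comp ((continuous_id.smul continuous_const))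
    have key : F t = ∫ s in (0:ℝ)..1, fderiv ℝ F (s • t) t := by
      have h1 : ∀ s ∈ Set.uIcc (0:ℝ) 1, HasDerivAt (fun u : ℝ => F (u • t))
          (fderiv ℝ F (s • t) t) s := fun s _ =>
        ((hF.differentiable (by simp) (s • t)).hasFDerivAt).comp_hasDerivAt s
          (by simpa using (hasDerivAt_id s).smul_const t)
      have h2 : IntervalIntegrable (fun s : ℝ => fderiv ℝ F (s • t) t) MeasureTheory.volume 0 1 :=
        ((ContinuousLinearMap.apply ℝ ℝ t).continuous.comp hcont).intervalIntegrable 0 1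
      have := intervalIntegral.integral_eq_sub_of_hasDerivAt h1 h2
      rw [this]
      simp [hF0]
    have ht : (∑ i, t i • EuclideanSpace.single i (1:ℝ)) = t := by
      simpa [EuclideanSpace.basisFun_apply, EuclideanSpace.basisFun_repr] using
        (EuclideanSpace.basisFun (Fin m) ℝ).sum_repr t
    have expand : ∀ y : E, fderiv ℝ F y t = ∑ i, t i * fderiv ℝ F y (EuclideanSpace.single i 1) := by
      intro y
      conv_lhs => rw [← ht]
      rw [map_sum]
      exact Finset.sum_congr rfl fun i _ => by rw [ContinuousLinearMap.map_smul]; simp [smul_eq_mul]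
    rw [key]
    calc (∫ s in (0:ℝ)..1, fderiv ℝ F (s • t) t)
        = ∫ s in (0:ℝ)..1, ∑ i, t i * fderiv ℝ F (s • t) (EuclideanSpace.single i 1) := by
          exact intervalIntegral.integral_congr fun s _ => expand (s • t)
      _ = ∑ i, ∫ s in (0:ℝ)..1, t i * fderiv ℝ F (s • t) (EuclideanSpace.single i 1) := by
          refine intervalIntegral.integral_finset_sum fun i _ => ?_
          exact (continuous_const.mul ((ContinuousLinearMap.apply ℝ ℝ
            (EuclideanSpace.single i 1)).continuous.comp hcont)).intervalIntegrable 0 1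
      _ = ∑ i, t i * ∫ s in (0:ℝ)..1, fderiv ℝ F (s • t) (EuclideanSpace.single i 1) := by
          simp [intervalIntegral.integral_const_mul]


lemma extend_loc (U : Set (EuclideanSpace ℝ (Fin m))) (hU : IsOpen U) (h0 : (0:E) ∈ U)
    (f : E → ℝ) (hf : ContDiffOn ℝ ∞ f U) :
    ∃ F : E → ℝ, ContDiff ℝ ∞ F ∧ F =ᶠ[𝓝 0] f := by
  classical
  obtain ⟨ε, εpos, hεU⟩ := Metric.isOpen_iff.1 hU 0 h0
  have h3 : (0:ℝ) < ε/3 := by linarith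
  set χ : ContDiffBump (0:E) := ⟨ε/3, ε/2, by linarith, by linarith⟩ with hχ
  refine ⟨fun t => if t ∈ ball (0:E) ε then χ t * f t else 0, ?_, ?_⟩
  · rw [contDiff_iff_contDiffAt]
    intro t
    by_cases ht : t ∈ ball (0:E) ε
    · have h1 : ContDiffAt ℝ ∞ (fun t => χ t * f t) t :=
        χ.contDiff.contDiffAt.mul (hf.contDiffAt (hU.mem_nhds (hεU ht)))
      refine h1.congr_of_eventuallyEq ?_
      filter_upwards [isOpen_ball.mem_nhds ht] with y hy
      simp [hy]
    · have ht' : t ∈ (closedBall (0:E) (ε/2))ᶜ := by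
        have : ¬ dist t 0 < ε := by simpa [mem_ball] using ht
        simp only [Set.mem_compl_iff, mem_closedBall, not_le]
        linarith [not_lt.1 this]
      have h1 : ContDiffAt ℝ ∞ (fun _ : E => (0:ℝ)) t := contDiffAt_const
      refine h1.congr_of_eventuallyEq ?_
      filter_upwards [(Metric.isClosed_closedBall (x := (0:E)) (ε := ε/2)).isOpen_compl.mem_nhds ht'] with y hy
      by_cases hy2 : y ∈ ball (0:E) ε
      · have hz : χ y = 0 := χ.zero_of_le_dist (by
          simp only [Set.mem_compl_iff, mem_closedBall, not_le] at hy
          exact le_of_lt hy)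
        simp [hy2, hz]
      · simp [hy2]
  · filter_upwards [ball_mem_nhds (0:E) h3] with y hy
    have h1 : y ∈ ball (0:E) ε := by
      rw [mem_ball, dist_zero_right] at hy ⊢; linarith
    have h2 : χ y = 1 := χ.one_of_mem_closedBall (by
      rw [mem_ball, dist_zero_right] at hy
      rw [mem_closedBall, dist_zero_right]
      simpa [hχ] using le_of_lt hy)
    simp [h1, h2]


lemma smooth_chart_rep (p : M) (f : SF m M) :
    ContDiffOn ℝ ∞ (⇑f ∘ ⇑(chartAt (EuclideanSpace ℝ (Fin m)) p).symm)
      (chartAt (EuclideanSpace ℝ (Fin m)) p).target := by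
  have h1 : ContMDiffOn (𝓡 m) 𝓘(ℝ, ℝ) ∞ (⇑f ∘ ⇑(chartAt (EuclideanSpace ℝ (Fin m)) p).symm)
      (chartAt (EuclideanSpace ℝ (Fin m)) p).target :=
    f.contMDiff.comp_contMDiffOn contMDiffOn_chart_symm
  exact h1.contDiffOn

lemma diff_chart_rep (p : M) (f : SF m M) :
    DifferentiableAt ℝ (⇑f ∘ ⇑(chartAt (EuclideanSpace ℝ (Fin m)) p).symm)
      (chartAt (EuclideanSpace ℝ (Fin m)) p p) :=
  ((smooth_chart_rep m p f).contDiffAt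
    ((chartAt (EuclideanSpace ℝ (Fin m)) p).open_target.mem_nhds
      ((chartAt (EuclideanSpace ℝ (Fin m)) p).map_source (mem_chart_source _ p)))).differentiableAt
    (by simp)

/-- Differential of a smooth function at `p`, read in the chart. -/
def dAt (p : M) : SF m M →ₗ[ℝ] (EuclideanSpace ℝ (Fin m) →L[ℝ] ℝ) where
  toFun f := fderiv ℝ (⇑f ∘ ⇑(chartAt (EuclideanSpace ℝ (Fin m)) p).symm)
    (chartAt (EuclideanSpace ℝ (Fin m)) p p)
  map_add' f g := by
    have : (⇑(f + g) ∘ ⇑(chartAt (EuclideanSpace ℝ (Fin m)) p).symm) =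
        (fun y => (⇑f ∘ ⇑(chartAt (EuclideanSpace ℝ (Fin m)) p).symm) y +
          (⇑g ∘ ⇑(chartAt (EuclideanSpace ℝ (Fin m)) p).symm) y) := by
      funext y; simp
    rw [this, fderiv_fun_add (diff_chart_rep m p f) (diff_chart_rep m p g)]
  map_smul' c f := by
    have : (⇑(c • f) ∘ ⇑(chartAt (EuclideanSpace ℝ (Fin m)) p).symm) =
        (fun y => c • (⇑f ∘ ⇑(chartAt (EuclideanSpace ℝ (Fin m)) p).symm) y) := by
      funext y; simp
    rw [this, fderiv_fun_const_smul (diff_chart_rep m p f)]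
    rfl

lemma tendsto_symm_chart (p : M) :
    Tendsto (⇑(chartAt (EuclideanSpace ℝ (Fin m)) p).symm)
      (𝓝 (chartAt (EuclideanSpace ℝ (Fin m)) p p)) (𝓝 p) := by
  have h1 := (chartAt (EuclideanSpace ℝ (Fin m)) p).continuousAt_symm
    ((chartAt (EuclideanSpace ℝ (Fin m)) p).map_source (mem_chart_source _ p))
  rw [ContinuousAt] at h1
  rwa [(chartAt (EuclideanSpace ℝ (Fin m)) p).left_inv (mem_chart_source _ p)] at h1

lemma dAt_congr (p : M) (f g : SF m M)
    (h : Ideal.Quotient.mk (nhdIdeal m p) f = Ideal.Quotient.mk (nhdIdeal m p) g) :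
    dAt m p f = dAt m p g := by
  have hfg : f - g ∈ nhdIdeal m p := Ideal.Quotient.eq.1 h
  have hev : ∀ᶠ x in 𝓝 p, f x = g x := by
    filter_upwards [hfg] with q hq
    have : f q - g q = 0 := by simpa using hq
    linarith
  have hev2 : (⇑f ∘ ⇑(chartAt (EuclideanSpace ℝ (Fin m)) p).symm) =ᶠ[𝓝
      (chartAt (EuclideanSpace ℝ (Fin m)) p p)]
      (⇑g ∘ ⇑(chartAt (EuclideanSpace ℝ (Fin m)) p).symm) :=
    (tendsto_symm_chart m p).eventually hev
  exact hev2.fderiv_eq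

lemma dAt_mul (p : M) (f g : SF m M) (hf : f p = 0) (hg : g p = 0) :
    dAt m p (f * g) = 0 := by
  have h1 : (⇑(f * g) ∘ ⇑(chartAt (EuclideanSpace ℝ (Fin m)) p).symm) =
      (fun y => (⇑f ∘ ⇑(chartAt (EuclideanSpace ℝ (Fin m)) p).symm) y *
        (⇑g ∘ ⇑(chartAt (EuclideanSpace ℝ (Fin m)) p).symm) y) := by
    funext y; simp
  show fderiv ℝ (⇑(f * g) ∘ ⇑(chartAt (EuclideanSpace ℝ (Fin m)) p).symm)
    (chartAt (EuclideanSpace ℝ (Fin m)) p p) = 0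
  rw [h1, fderiv_fun_mul (diff_chart_rep m p f) (diff_chart_rep m p g)]
  have hψ : (chartAt (EuclideanSpace ℝ (Fin m)) p).symm
      (chartAt (EuclideanSpace ℝ (Fin m)) p p) = p :=
    (chartAt (EuclideanSpace ℝ (Fin m)) p).left_inv (mem_chart_source _ p)
  simp [Function.comp, hψ, hf, hg]

lemma dAt_zero_of_sq (p : M) (w : SF m M)
    (hw : Ideal.Quotient.mk (nhdIdeal m p) w ∈ mIdeal m p ^ 2) :
    dAt m p w = 0 := by
  rw [pow_two] at hw
  have key : ∀ g ∈ mIdeal m p * mIdeal m p, ∀ w : SF m M,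
      Ideal.Quotient.mk (nhdIdeal m p) w = g → dAt m p w = 0 := by
    intro g hg
    refine Submodule.mul_induction_on hg ?_ ?_
    · intro a ha b hb w hw'
      obtain ⟨u, hu⟩ := Ideal.Quotient.mk_surjective a
      obtain ⟨v, hv⟩ := Ideal.Quotient.mk_surjective b
      have hup : u p = 0 := by
        have : germEval m p a = 0 := ha
        rw [← hu] at this
        exact this
      have hvp : v p = 0 := by
        have : germEval m p b = 0 := hb
        rw [← hv] at this
        exact this
      have : Ideal.Quotient.mk (nhdIdeal m p) w = Ideal.Quotient.mk (nhdIdeal m p) (u * v) := by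
        rw [map_mul, hu, hv, hw']
      rw [dAt_congr m p w (u * v) this]
      exact dAt_mul m p u v hup hvp
    · intro g₁ g₂ h1 h2 w hw'
      obtain ⟨w₁, hw₁⟩ := Ideal.Quotient.mk_surjective g₁
      have h2' := h2 (w - w₁) (by rw [map_sub, hw₁, hw']; ring)
      have h1' := h1 w₁ hw₁
      have hsplit : w = w₁ + (w - w₁) := by ring
      rw [hsplit, map_add, h1', h2', add_zero]
  exact key _ hw w rfl

lemma dAt_coord (p : M) (x : Fin m → SF m M)
    (hchart : ∀ i, ∀ᶠ q in 𝓝 p, x i q = chartAt (EuclideanSpace ℝ (Fin m)) p q i) (i : Fin m) :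
    dAt m p (x i) = EuclideanSpace.proj i := by
  have h2 : ∀ᶠ t in 𝓝 (chartAt (EuclideanSpace ℝ (Fin m)) p p),
      t ∈ (chartAt (EuclideanSpace ℝ (Fin m)) p).target :=
    (chartAt (EuclideanSpace ℝ (Fin m)) p).open_target.mem_nhds
      ((chartAt (EuclideanSpace ℝ (Fin m)) p).map_source (mem_chart_source _ p))
  have hev : (⇑(x i) ∘ ⇑(chartAt (EuclideanSpace ℝ (Fin m)) p).symm) =ᶠ[𝓝
      (chartAt (EuclideanSpace ℝ (Fin m)) p p)] (fun t => t i) := by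
    filter_upwards [(tendsto_symm_chart m p).eventually (hchart i), h2] with t h1t h2t
    simp only [Function.comp]
    rw [h1t, (chartAt (EuclideanSpace ℝ (Fin m)) p).right_inv h2t]
  show fderiv ℝ _ _ = _
  rw [hev.fderiv_eq]
  have : (fun t : EuclideanSpace ℝ (Fin m) => t i) = ⇑(EuclideanSpace.proj (𝕜 := ℝ) i) := rfl
  rw [this, ContinuousLinearMap.fderiv]

lemma mk_sum_smul (p : M) (g : Fin m → ℝ) (w : Fin m → SF m M) :
    Ideal.Quotient.mk (nhdIdeal m p) (∑ i, g i • w i) =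
      ∑ i, g i • Ideal.Quotient.mk (nhdIdeal m p) (w i) := by
  have h1 := map_sum (Ideal.Quotient.mkₐ ℝ (nhdIdeal m p)) (fun i => g i • w i) Finset.univ
  rw [Ideal.Quotient.mkₐ_eq_mk] at h1
  rw [h1]
  refine Finset.sum_congr rfl fun i _ => ?_
  have h2 := _root_.map_smul (Ideal.Quotient.mkₐ ℝ (nhdIdeal m p)) (g i) (w i)
  rw [Ideal.Quotient.mkₐ_eq_mk] at h2
  exact h2

lemma indep_aux (p : M) (x : Fin m → SF m M)
    (hchart : ∀ i, ∀ᶠ q in 𝓝 p, x i q = chartAt (EuclideanSpace ℝ (Fin m)) p q i)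
    (g : Fin m → ℝ)
    (hg : (∑ i, g i • Ideal.Quotient.mk (nhdIdeal m p) (x i)) ∈ mIdeal m p ^ 2)
    (j : Fin m) : g j = 0 := by
  have h1 : Ideal.Quotient.mk (nhdIdeal m p) (∑ i, g i • x i) ∈ mIdeal m p ^ 2 := by
    rw [mk_sum_smul]; exact hg
  have h2 := dAt_zero_of_sq m p _ h1
  have h3 : dAt m p (∑ i, g i • x i) = ∑ i, g i • EuclideanSpace.proj (𝕜 := ℝ) i := by
    rw [map_sum]
    exact Finset.sum_congr rfl fun i _ => by rw [_root_.map_smul, dAt_coord m p x hchart]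
  rw [h3] at h2
  have h4 := congrArg (fun (ℓ : EuclideanSpace ℝ (Fin m) →L[ℝ] ℝ) =>
    ℓ (EuclideanSpace.single j 1)) h2
  simpa [EuclideanSpace.proj, PiLp.proj_apply, EuclideanSpace.single_apply,
    Finset.sum_ite_eq'] using h4

lemma span_aux (p : M) (x : Fin m → SF m M)
    (hchart : ∀ i, ∀ᶠ q in 𝓝 p, x i q = chartAt (EuclideanSpace ℝ (Fin m)) p q i)
    (hx0 : ∀ i, x i p = 0) (f : SF m M) (hfp : f p = 0) :
    ∃ r : Fin m → ℝ, ∃ h : Fin m → Germs m p, (∀ i, h i ∈ mIdeal m p) ∧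
      Ideal.Quotient.mk (nhdIdeal m p) f =
        ∑ i, (r i • Ideal.Quotient.mk (nhdIdeal m p) (x i) +
          Ideal.Quotient.mk (nhdIdeal m p) (x i) * h i) := by
  classical
  set φ := chartAt (EuclideanSpace ℝ (Fin m)) p with hφ
  have hc0 : φ p = 0 := by
    ext j
    have h1 : x j p = φ p j := (hchart j).self_of_nhds
    have := hx0 j
    rw [h1] at this
    exact this
  have hsymm0 : φ.symm 0 = p := by rw [← hc0]; exact φ.left_inv (mem_chart_source _ p)
  have h0t : (0 : EuclideanSpace ℝ (Fin m)) ∈ φ.target := by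
    rw [← hc0]; exact φ.map_source (mem_chart_source _ p)
  obtain ⟨F, hF, hFev⟩ := extend_loc m φ.target φ.open_target h0t
    (⇑f ∘ ⇑φ.symm) (smooth_chart_rep m p f)
  have hF0 : F 0 = 0 := by
    rw [hFev.self_of_nhds]; simp [Function.comp, hsymm0, hfp]
  obtain ⟨G, hGsm, hGrep⟩ := hadamard m F hF hF0
  set Φfun : M → EuclideanSpace ℝ (Fin m) :=
    fun q => (EuclideanSpace.equiv (Fin m) ℝ).symm (fun j => x j q) with hΦdef
  have hΦ : ContMDiff (𝓡 m) (𝓡 m) ∞ Φfun := by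
    have h1 : ContMDiff (𝓡 m) 𝓘(ℝ, Fin m → ℝ) ∞ (fun q (j : Fin m) => x j q) :=
      contMDiff_pi_space.2 fun j => (x j).contMDiff
    exact (((EuclideanSpace.equiv (Fin m) ℝ).symm.contDiff).contMDiff).comp h1
  set gfun : Fin m → SF m M := fun i => ⟨fun q => G i (Φfun q), ((hGsm i).contMDiff).comp hΦ⟩
    with hgdef
  have hΦp : ∀ᶠ q in 𝓝 p, Φfun q = φ q := by
    have hall : ∀ᶠ q in 𝓝 p, ∀ j, x j q = φ q j := eventually_all.2 hchart
    filter_upwards [hall] with q hq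
    ext j
    exact hq j
  have hloc : ∀ᶠ q in 𝓝 p, f q = ∑ i, x i q * gfun i q := by
    have hs : ∀ᶠ q in 𝓝 p, q ∈ φ.source := φ.open_source.mem_nhds (mem_chart_source _ p)
    have hφ0 : Tendsto (⇑φ) (𝓝 p) (𝓝 0) := by
      have h1 : ContinuousAt (⇑φ) p := φ.continuousAt (mem_chart_source _ p)
      rw [ContinuousAt, hc0] at h1
      exact h1
    filter_upwards [hs, hφ0.eventually hFev, hΦp] with q hq hq2 hq3
    have hFq : F (φ q) = f q := by rw [hq2]; simp [Function.comp, φ.left_inv hq]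
    rw [← hFq, hGrep (φ q)]
    refine Finset.sum_congr rfl fun i _ => ?_
    rw [← hq3]
    rfl
  refine ⟨fun i => gfun i p, fun i => Ideal.Quotient.mk (nhdIdeal m p) (gfun i) -
    Ideal.Quotient.mk (nhdIdeal m p) (algebraMap ℝ (SF m M) (gfun i p)), ?_, ?_⟩
  · intro i
    show _ ∈ RingHom.ker (germEval m p)
    rw [RingHom.mem_ker, map_sub]
    have h1 : germEval m p (Ideal.Quotient.mk (nhdIdeal m p) (gfun i)) = gfun i p := rfl
    have h2 : germEval m p (Ideal.Quotient.mk (nhdIdeal m p)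
        (algebraMap ℝ (SF m M) (gfun i p))) = gfun i p := rfl
    rw [h1, h2, sub_self]
  · have hkey : Ideal.Quotient.mk (nhdIdeal m p) f =
        ∑ i, Ideal.Quotient.mk (nhdIdeal m p) (x i * gfun i) := by
      have hsum : ∑ i, Ideal.Quotient.mk (nhdIdeal m p) (x i * gfun i) =
          Ideal.Quotient.mk (nhdIdeal m p) (∑ i, x i * gfun i) :=
        (map_sum (Ideal.Quotient.mk (nhdIdeal m p)) (fun i => x i * gfun i) Finset.univ).symm
      rw [hsum, Ideal.Quotient.eq]
      show _ ∈ {h : SF m M | ∀ᶠ y in 𝓝 p, h y = 0}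
      filter_upwards [hloc] with q hq
      have he : (f - ∑ i, x i * gfun i) q = evalHom m q (f - ∑ i, x i * gfun i) := rfl
      rw [he, map_sub, map_sum]
      simp only [map_mul]
      have : ∀ i, evalHom m q (x i) * evalHom m q (gfun i) = x i q * gfun i q := fun i => rfl
      simp only [this]
      show f q - _ = 0
      rw [sub_eq_zero]
      exact hq
    rw [hkey]
    refine Finset.sum_congr rfl fun i _ => ?_
    rw [map_mul]
    have halg : Ideal.Quotient.mk (nhdIdeal m p) (algebraMap ℝ (SF m M) (gfun i p)) =
        algebraMap ℝ (Germs m p) (gfun i p) := rfl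
    dsimp only
    have hsm : (gfun i p) • Ideal.Quotient.mk (nhdIdeal m p) (x i) =
        Ideal.Quotient.mk (nhdIdeal m p) (algebraMap ℝ (SF m M) (gfun i p)) *
          Ideal.Quotient.mk (nhdIdeal m p) (x i) := by
      have h1 : Ideal.Quotient.mk (nhdIdeal m p) ((gfun i p) • (x i)) =
          (gfun i p) • Ideal.Quotient.mk (nhdIdeal m p) (x i) :=
        Submodule.Quotient.mk_smul _ _ _
      rw [← h1, Algebra.smul_def, map_mul]
    rw [hsm]
    ring

theorem coordinate_classes_basis (p : M) (x : Fin m → SF m M)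
    (hchart : ∀ i, ∀ᶠ q in nhds p,
      x i q = chartAt (EuclideanSpace ℝ (Fin m)) p q i)
    (hx0 : ∀ i, x i p = 0) :
    LinearIndependent ℝ (fun i : Fin m =>
        (Submodule.Quotient.mk
          ⟨Ideal.Quotient.mk (nhdIdeal m p) (x i), mk_mem_mIdeal m p (x i) (hx0 i)⟩ :
          IQ m p 1)) ∧
      Submodule.span ℝ (Set.range (fun i : Fin m =>
        (Submodule.Quotient.mk
          ⟨Ideal.Quotient.mk (nhdIdeal m p) (x i), mk_mem_mIdeal m p (x i) (hx0 i)⟩ :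
          IQ m p 1))) = ⊤ ∧
      Module.finrank ℝ (IQ m p 1) = m := by
  classical
  set v : Fin m → IQ m p 1 := fun i : Fin m =>
    (Submodule.Quotient.mk
      ⟨Ideal.Quotient.mk (nhdIdeal m p) (x i), mk_mem_mIdeal m p (x i) (hx0 i)⟩ :
      IQ m p 1) with hv
  set N := (mIdeal m p).restrictScalars ℝ with hN
  set P := Submodule.comap ((mIdeal m p).restrictScalars ℝ).subtype
      ((mIdeal m p ^ (1 + 1)).restrictScalars ℝ) with hP
  have hmkQ : ∀ e : N, P.mkQ e = Submodule.Quotient.mk e := fun e => rfl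
  have hpow : mIdeal m p ^ (1 + 1) = mIdeal m p * mIdeal m p := by
    norm_num [pow_two]
  have hind : LinearIndependent ℝ v := by
    rw [Fintype.linearIndependent_iff]
    intro g hg j
    have h1 : P.mkQ (∑ i, g i • (⟨Ideal.Quotient.mk (nhdIdeal m p) (x i),
        mk_mem_mIdeal m p (x i) (hx0 i)⟩ : N)) = 0 := by
      rw [map_sum]
      simp only [_root_.map_smul, hmkQ]
      exact hg
    rw [hmkQ, Submodule.Quotient.mk_eq_zero] at h1
    rw [hP, Submodule.mem_comap] at h1
    have h2 : (((∑ i, g i • (⟨Ideal.Quotient.mk (nhdIdeal m p) (x i),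
        mk_mem_mIdeal m p (x i) (hx0 i)⟩ : N)) : N) : Germs m p) =
        ∑ i, g i • Ideal.Quotient.mk (nhdIdeal m p) (x i) := by
      simp
    rw [Submodule.coe_subtype, h2, Submodule.restrictScalars_mem] at h1
    refine indep_aux m p x hchart g ?_ j
    rwa [show mIdeal m p ^ 2 = mIdeal m p ^ (1+1) by norm_num]
  have hspan : Submodule.span ℝ (Set.range v) = ⊤ := by
    rw [eq_top_iff]
    rintro w -
    obtain ⟨e, rfl⟩ := Submodule.Quotient.mk_surjective _ w
    obtain ⟨gm, hgm⟩ := e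
    obtain ⟨f, rfl⟩ := Ideal.Quotient.mk_surjective gm
    have hfp : f p = 0 := by
      have h0 : germEval m p (Ideal.Quotient.mk (nhdIdeal m p) f) = 0 := hgm
      exact h0
    obtain ⟨r, h, hmem, hkey⟩ := span_aux m p x hchart hx0 f hfp
    have hdecomp : Submodule.Quotient.mk (p := P)
        (⟨Ideal.Quotient.mk (nhdIdeal m p) f, hgm⟩ : N) = ∑ i, r i • v i := by
      have hsum : (∑ i, r i • v i) = Submodule.Quotient.mk (p := P)
          (∑ i, r i • (⟨Ideal.Quotient.mk (nhdIdeal m p) (x i),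
            mk_mem_mIdeal m p (x i) (hx0 i)⟩ : N)) := by
        rw [← hmkQ, map_sum]
        simp only [_root_.map_smul, hmkQ]
        refine Finset.sum_congr rfl fun i _ => ?_
        rw [Submodule.Quotient.mk_smul]
      rw [hsum, Submodule.Quotient.eq]
      rw [hP, Submodule.mem_comap]
      have hco : ((((⟨Ideal.Quotient.mk (nhdIdeal m p) f, hgm⟩ : N) -
          ∑ i, r i • (⟨Ideal.Quotient.mk (nhdIdeal m p) (x i),
            mk_mem_mIdeal m p (x i) (hx0 i)⟩ : N)) : N) : Germs m p) =
          Ideal.Quotient.mk (nhdIdeal m p) f -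
            ∑ i, r i • Ideal.Quotient.mk (nhdIdeal m p) (x i) := by
        simp
      rw [Submodule.coe_subtype, hco, Submodule.restrictScalars_mem, hkey,
        Finset.sum_add_distrib, add_sub_cancel_left, hpow]
      exact sum_mem fun i _ => Ideal.mul_mem_mul
        (by simpa using mk_mem_mIdeal m p (x i) (hx0 i)) (hmem i)
    rw [hdecomp]
    exact sum_mem fun i _ =>
      Submodule.smul_mem _ _ (Submodule.subset_span (Set.mem_range_self i))
  refine ⟨hind, hspan, ?_⟩
  have b : Module.Basis (Fin m) ℝ (IQ m p 1) := Module.Basis.mk hind (by rw [hspan])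
  rw [Module.finrank_eq_card_basis b, Fintype.card_fin]
end
end

section
/- Let F_p be the germs of smooth functions at a point p of a smooth manifold and I_p the ideal of germs vanishing at p. Every derivation of order ≤ r at p (a differential operator of order ≤ r at p, in the recursive sense, vanishing on constants) vanishes on I_p^{r+1}, and the space of such derivations is in linear bijection with (I_p / I_p^{r+1})*. -/
open scoped Manifold

set_option synthInstance.maxHeartbeats 400000
set_option maxHeartbeats 1000000

noncomputable section

variable (m : ℕ) {M : Type*} [TopologicalSpace M]
  [ChartedSpace (EuclideanSpace ℝ (Fin m)) M]
  [IsManifold (𝓡 m) (⊤ : ℕ∞) M]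

/-- Differential operators of order ≤ r at `p`, recursively: order 0 is multiplication by
a germ followed by evaluation at `p`; `D` has order ≤ r+1 iff for every germ `g` the map
`f ↦ D(gf) − g(p)D(f)` has order ≤ r. -/
def IsDiffOpAt (p : M) : ℕ → (Germs m p →ₗ[ℝ] ℝ) → Prop
  | 0, D => ∃ g : Germs m p, ∀ f : Germs m p, D f = germEval m p (g * f)
  | (r + 1), D => ∀ g : Germs m p,
      IsDiffOpAt p r (D ∘ₗ LinearMap.mulLeft ℝ g - germEval m p g • D)

/-- Derivations of order ≤ r at `p`: differential operators of order ≤ r at `p`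
vanishing on constants. -/
def IsDerivAt (p : M) (r : ℕ) (D : Germs m p →ₗ[ℝ] ℝ) : Prop :=
  IsDiffOpAt m p r D ∧ ∀ c : ℝ, D (algebraMap ℝ (Germs m p) c) = 0

set_option linter.unusedSectionVars false

lemma germEval_algebraMap (p : M) (c : ℝ) :
    germEval m p (algebraMap ℝ (Germs m p) c) = c := rfl

lemma mem_mIdeal (p : M) (f : Germs m p) :
    f ∈ mIdeal m p ↔ germEval m p f = 0 := RingHom.mem_ker

lemma germEval_smul (p : M) (c : ℝ) (f : Germs m p) :
    germEval m p (c • f) = c * germEval m p f := by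
  obtain ⟨f, rfl⟩ := Ideal.Quotient.mk_surjective f
  rfl

/-- A differential operator of order ≤ r kills `I_p^{r+1}`. -/
lemma diffOp_vanish (p : M) : ∀ (r : ℕ) (D : Germs m p →ₗ[ℝ] ℝ),
    IsDiffOpAt m p r D → ∀ f ∈ mIdeal m p ^ (r + 1), D f = 0 := by
  intro r
  induction r with
  | zero =>
    intro D hD f hf
    obtain ⟨g, hg⟩ := hD
    rw [pow_one (M := Ideal (Germs m p)), mem_mIdeal] at hf
    rw [hg, map_mul, hf, mul_zero]
  | succ r ih =>
    intro D hD f hf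
    rw [pow_succ' (M := Ideal (Germs m p))] at hf
    refine Submodule.mul_induction_on hf ?_ ?_
    · intro g hg h hh
      have h1 := ih _ (hD g) h hh
      simp only [LinearMap.sub_apply, LinearMap.comp_apply, LinearMap.smul_apply,
        LinearMap.mulLeft_apply, sub_eq_zero] at h1
      rw [h1, (mem_mIdeal m p g).1 hg]
      simp
    · intro x y hx hy; rw [map_add, hx, hy, add_zero]

/-- A linear functional killing `I_p^{r+1}` is a differential operator of order ≤ r. -/
lemma vanish_diffOp (p : M) : ∀ (r : ℕ) (D : Germs m p →ₗ[ℝ] ℝ),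
    (∀ f ∈ mIdeal m p ^ (r + 1), D f = 0) → IsDiffOpAt m p r D := by
  intro r
  induction r with
  | zero =>
    intro D hD
    refine ⟨algebraMap ℝ _ (D 1), fun f => ?_⟩
    have hmem : f - germEval m p f • 1 ∈ mIdeal m p ^ (0 + 1) := by
      rw [pow_one, mem_mIdeal, map_sub, germEval_smul, map_one, mul_one, sub_self]
    have h0 := hD _ hmem
    rw [map_sub, map_smul, sub_eq_zero] at h0
    rw [h0, map_mul, germEval_algebraMap]
    simp [mul_comm]
  | succ r ih =>
    intro D hD g
    apply ih
    intro h hh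
    simp only [LinearMap.sub_apply, LinearMap.comp_apply, LinearMap.smul_apply,
      LinearMap.mulLeft_apply]
    have hgmem : g - algebraMap ℝ _ (germEval m p g) ∈ mIdeal m p := by
      rw [mem_mIdeal, map_sub, germEval_algebraMap, sub_self]
    have hmem : (g - algebraMap ℝ _ (germEval m p g)) * h ∈ mIdeal m p ^ (r + 1 + 1) := by
      rw [pow_succ' (M := Ideal (Germs m p))]
      exact Submodule.mul_mem_mul hgmem hh
    have h2 := hD _ hmem
    rw [sub_mul, map_sub, sub_eq_zero] at h2
    rw [h2, ← Algebra.smul_def, map_smul]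
    simp

/-- `f ↦ f - f(p)·1` as a linear map into `I_p`. -/
def piMap (p : M) : Germs m p →ₗ[ℝ] ((mIdeal m p).restrictScalars ℝ) where
  toFun f := ⟨f - germEval m p f • 1, by
    rw [Submodule.restrictScalars_mem, mem_mIdeal, map_sub, germEval_smul, map_one,
      mul_one, sub_self]⟩
  map_add' f g := by
    ext
    simp only [Submodule.coe_add, map_add]
    push_cast
    rw [add_smul]
    ring
  map_smul' c f := by
    ext
    simp only [RingHom.id_apply, SetLike.val_smul]
    rw [germEval_smul, smul_sub, mul_smul, smul_smul]

/-- every derivation of order ≤ r at `p` vanishes on `I_p^{r+1}`, and the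
space of such derivations is in linear bijection with `(I_p / I_p^{r+1})^*`. -/
theorem derivations_at_point_iso (p : M) (r : ℕ) :
    (∀ D : Germs m p →ₗ[ℝ] ℝ, IsDerivAt m p r D →
        ∀ f ∈ mIdeal m p ^ (r + 1), D f = 0) ∧
      ∃ Φ : {D : Germs m p →ₗ[ℝ] ℝ // IsDerivAt m p r D} ≃ (IQ m p r →ₗ[ℝ] ℝ),
        ∀ (D : Germs m p →ₗ[ℝ] ℝ) (hD : IsDerivAt m p r D) (f : Germs m p)
          (hf : f ∈ (mIdeal m p).restrictScalars ℝ),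
          Φ ⟨D, hD⟩ (Submodule.Quotient.mk ⟨f, hf⟩) = D f := by
  refine ⟨fun D hD => diffOp_vanish m p r D hD.1, ?_⟩
  set N := (Submodule.comap ((mIdeal m p).restrictScalars ℝ).subtype
      ((mIdeal m p ^ (r + 1)).restrictScalars ℝ)) with hN
  have toF : ∀ D : {D : Germs m p →ₗ[ℝ] ℝ // IsDerivAt m p r D}, N ≤
      LinearMap.ker (D.1 ∘ₗ ((mIdeal m p).restrictScalars ℝ).subtype) := by
    intro D x hx
    exact diffOp_vanish m p r D.1 D.2.1 x.1 hx
  refine ⟨{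
    toFun := fun D => Submodule.liftQ N (D.1 ∘ₗ ((mIdeal m p).restrictScalars ℝ).subtype) (toF D)
    invFun := fun φ => ⟨φ ∘ₗ N.mkQ ∘ₗ piMap m p, ?_, ?_⟩
    left_inv := ?_
    right_inv := ?_ }, ?_⟩
  · -- is diff op
    apply vanish_diffOp
    intro f hf
    have hf' : f ∈ mIdeal m p := by
      have := Ideal.pow_le_self (n := r + 1) (by omega) hf
      exact this
    have hev : germEval m p f = 0 := (mem_mIdeal m p f).1 hf'
    simp only [LinearMap.comp_apply]
    have hmk : N.mkQ (piMap m p f) = 0 := by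
      rw [Submodule.mkQ_apply, Submodule.Quotient.mk_eq_zero, hN, Submodule.mem_comap]
      show (piMap m p f : Germs m p) ∈ _
      simp only [piMap, LinearMap.coe_mk, AddHom.coe_mk, hev, zero_smul, sub_zero]
      exact hf
    rw [hmk, map_zero]
  · -- kills constants
    intro c
    simp only [LinearMap.comp_apply]
    have : piMap m p (algebraMap ℝ (Germs m p) c) = 0 := by
      ext
      show algebraMap ℝ (Germs m p) c - germEval m p (algebraMap ℝ (Germs m p) c) • 1 = 0
      rw [germEval_algebraMap, Algebra.algebraMap_eq_smul_one, sub_self]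
    rw [this, map_zero, map_zero]
  · -- left inverse
    rintro ⟨D, hD⟩
    apply Subtype.ext
    apply LinearMap.ext
    intro f
    simp only [LinearMap.comp_apply, Submodule.mkQ_apply, Submodule.liftQ_apply]
    show D ((piMap m p f : Germs m p)) = D f
    have hpi : (piMap m p f : Germs m p) = f - germEval m p f • 1 := rfl
    rw [hpi]
    have h1 : D 1 = 0 := by
      have := hD.2 1
      rwa [map_one] at this
    rw [map_sub, map_smul, h1, smul_zero, sub_zero]
  · -- right inverse
    intro φ
    apply Submodule.linearMap_qext
    apply LinearMap.ext
    rintro ⟨f, hf⟩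
    simp only [LinearMap.comp_apply, Submodule.subtype_apply, Submodule.mkQ_apply,
      Submodule.liftQ_apply]
    have hev : germEval m p f = 0 := (mem_mIdeal m p f).1 hf
    have : piMap m p f = ⟨f, hf⟩ := by
      ext
      simp only [piMap, LinearMap.coe_mk, AddHom.coe_mk, hev, zero_smul, sub_zero]
    rw [this]
  · -- formula
    intro D hD f hf
    exact N.liftQ_apply _ ⟨f, hf⟩
end
end
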